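/- Let p be a prime, let F ∈ ℤ_p⟦T⟧ be nonzero with μ(F) = 0, and let n ≥ 0 satisfy λ(F) < p^n. Suppose F = ω_n·Q + R with Q ∈ ℤ_p⟦T⟧ and R ∈ ℤ_p[T] of degree < p^n. Then p does not divide R in ℤ_p[T]; that is, μ(R) = 0. -/

import Mathlib

open PowerSeries Polynomial Classical in
/-- `p`-adic valuation on `ℤ_[p]`, with value `⊤` at `0`. -/
noncomputable def vp (p : ℕ) [Fact p.Prime] (x : ℤ_[p]) : ℕ∞ :=
  if x = 0 then ⊤ else (x.valuation : ℕ∞)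

/-- Iwasawa `μ`-invariant: the minimum of the `p`-adic valuations of the coefficients. -/
noncomputable def mu (p : ℕ) [Fact p.Prime] (F : PowerSeries ℤ_[p]) : ℕ∞ :=
  ⨅ i : ℕ, vp p (PowerSeries.coeff i F)

/-- Iwasawa `λ`-invariant: the least index whose coefficient valuation attains `μ`. -/
noncomputable def lam (p : ℕ) [Fact p.Prime] (F : PowerSeries ℤ_[p]) : ℕ :=
  sInf { i : ℕ | vp p (PowerSeries.coeff i F) = mu p F }

lemma vp_eq_zero_iff (p : ℕ) [hp : Fact p.Prime] (x : ℤ_[p]) :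
    vp p x = 0 ↔ ¬ ((p : ℤ_[p]) ∣ x) := by
  unfold vp
  by_cases hx : x = 0
  · simp [hx]
  · rw [if_neg hx]
    have hnorm : ¬ ((p : ℤ_[p]) ∣ x) ↔ ‖x‖ = 1 := by
      rw [← PadicInt.norm_lt_one_iff_dvd, not_lt]
      constructor
      · intro h; exact le_antisymm (PadicInt.norm_le_one x) h
      · intro h; rw [h]
    rw [hnorm]
    have hval : ‖x‖ = 1 ↔ x.valuation = 0 := by
      rw [PadicInt.norm_eq_zpow_neg_valuation hx]
      constructor
      · intro h
        have h1 : (1 : ℝ) < (p : ℝ) := by exact_mod_cast hp.out.one_lt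
        have h2 : (p : ℝ) ^ (-(x.valuation : ℤ)) = (p : ℝ) ^ (0 : ℤ) := by rw [h, zpow_zero]
        have h3 := zpow_right_injective₀ (a := (p : ℝ)) (by positivity) (ne_of_gt h1) h2
        omega
      · intro h; simp [h]
    rw [hval]
    constructor
    · intro h
      have : x.valuation = 0 := by exact_mod_cast h
      have := Nat.zero_le x.valuation
      omega
    · intro h; simp [h]

theorem stmt_1 (p : ℕ) [Fact p.Prime] (F : PowerSeries ℤ_[p]) (hF : F ≠ 0)
    (hmu : mu p F = 0) (n : ℕ) (hlam : lam p F < p ^ n)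
    (Q : PowerSeries ℤ_[p]) (R : Polynomial ℤ_[p]) (hdeg : R.degree < (p ^ n : ℕ))
    (hFQR : F = (((1 + Polynomial.X) ^ p ^ n - 1 : Polynomial ℤ_[p]) : PowerSeries ℤ_[p]) * Q
      + (R : PowerSeries ℤ_[p])) :
    ¬ (Polynomial.C (p : ℤ_[p]) ∣ R) ∧ mu p (R : PowerSeries ℤ_[p]) = 0 := by
  have hp := (Fact.out : p.Prime)
  -- there exists an index with vp = 0
  have hex : ∃ i, vp p (PowerSeries.coeff i F) = 0 := by
    by_contra h
    push_neg at h
    have h1 : (1 : ℕ∞) ≤ mu p F := le_iInf fun i => ENat.one_le_iff_ne_zero.mpr (h i)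
    rw [hmu] at h1
    exact absurd h1 (by simp)
  -- lam attains it
  have hmem : lam p F ∈ { i : ℕ | vp p (PowerSeries.coeff i F) = mu p F } := by
    apply Nat.sInf_mem
    obtain ⟨i, hi⟩ := hex
    exact ⟨i, by rw [Set.mem_setOf_eq, hi, hmu]⟩
  have hvF : vp p (PowerSeries.coeff (lam p F) F) = 0 := by
    rw [Set.mem_setOf_eq] at hmem; rw [hmem, hmu]
  rw [vp_eq_zero_iff] at hvF
  set l := lam p F with hl
  -- coefficients of omega_n below p^n are divisible by p
  have homega : ∀ i < p ^ n,
      (p : ℤ_[p]) ∣ ((1 + Polynomial.X) ^ p ^ n - 1 : Polynomial ℤ_[p]).coeff i := by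
    intro i hi
    rw [Polynomial.coeff_sub, Polynomial.coeff_one_add_X_pow]
    rcases Nat.eq_zero_or_pos i with h0 | h0
    · subst h0; simp
    · rw [Polynomial.coeff_one, if_neg (by omega)]
      have : p ∣ (p ^ n).choose i := hp.dvd_choose_pow (by omega) (by omega)
      obtain ⟨c, hc⟩ := this
      exact ⟨(c : ℤ_[p]) , by rw [sub_zero, hc]; push_cast; ring⟩
  -- p divides coeff l of omega * Q
  have hdvdprod : (p : ℤ_[p]) ∣ PowerSeries.coeff l
      ((((1 + Polynomial.X) ^ p ^ n - 1 : Polynomial ℤ_[p]) : PowerSeries ℤ_[p]) * Q) := by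
    rw [PowerSeries.coeff_mul]
    apply Finset.dvd_sum
    rintro ⟨i, j⟩ hij
    rw [Finset.HasAntidiagonal.mem_antidiagonal] at hij
    have hi : i < p ^ n := lt_of_le_of_lt (by omega) hlam
    rw [Polynomial.coeff_coe]
    exact Dvd.dvd.mul_right (homega i hi) _
  -- hence p does not divide coeff l of R
  have hcoeffR : ¬ ((p : ℤ_[p]) ∣ R.coeff l) := by
    intro hdvd
    apply hvF
    rw [hFQR, map_add, Polynomial.coeff_coe]
    exact dvd_add hdvdprod hdvd
  constructor
  · intro hCd
    rw [Polynomial.C_dvd_iff_dvd_coeff] at hCd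
    exact hcoeffR (hCd l)
  · refine le_antisymm ?_ zero_le
    have : vp p (PowerSeries.coeff l (R : PowerSeries ℤ_[p])) = 0 := by
      rw [Polynomial.coeff_coe, vp_eq_zero_iff]
      exact hcoeffR
    calc mu p (R : PowerSeries ℤ_[p]) ≤ vp p (PowerSeries.coeff l (R : PowerSeries ℤ_[p])) :=
          iInf_le _ l
      _ = 0 := this
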